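/- arXiv:1405.4455 — 3 statements merged into one kernel-verified Lean document; each statement's English description precedes it below -/
import Mathlib

section
/- Let H and K be Hilbert spaces, and let φ: B(H,K) → B(H,K) and ψ: B(K,H) → B(K,H) be linear maps such that Y∘φ(W) = ψ(Y)∘W for all Y ∈ B(K,H) and W ∈ B(H,K). Then there exists an operator D ∈ B(K) such that φ(W) = D∘W for all W ∈ B(H,K) and ψ(Y) = Y∘D for all Y ∈ B(K,H). -/
open scoped ComplexConjugate

local notation "⟪" x ", " y "⟫" => @inner ℂ _ _ x y

/-- Theorem 2.2: if Y∘φ(W) = ψ(Y)∘W for all Y ∈ B(K,H), W ∈ B(H,K), then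
there is D ∈ B(K) with φ(W) = D∘W and ψ(Y) = Y∘D. -/
theorem stmt0 {H K : Type*}
    [NormedAddCommGroup H] [InnerProductSpace ℂ H] [CompleteSpace H]
    [NormedAddCommGroup K] [InnerProductSpace ℂ K] [CompleteSpace K]
    (φ : (H →L[ℂ] K) →ₗ[ℂ] (H →L[ℂ] K))
    (ψ : (K →L[ℂ] H) →ₗ[ℂ] (K →L[ℂ] H))
    (h : ∀ (Y : K →L[ℂ] H) (W : H →L[ℂ] K), Y.comp (φ W) = (ψ Y).comp W) :
    ∃ D : K →L[ℂ] K, (∀ W : H →L[ℂ] K, φ W = D.comp W) ∧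
      (∀ Y : K →L[ℂ] H, ψ Y = Y.comp D) := by
  by_cases hH : Subsingleton H
  · -- all operators in both spaces are zero
    refine ⟨0, fun W => ?_, fun Y => ?_⟩
    · have hW : W = 0 := by ext x; rw [Subsingleton.elim x 0]; simp
      have h0 : (0 : H →L[ℂ] K) = W := hW.symm
      ext x
      rw [Subsingleton.elim x 0]; simp
    · have hY : Y = 0 := by
        ext x
        exact Subsingleton.elim _ _
      subst hY; simp
  · have : Nontrivial H := not_subsingleton_iff_nontrivial.mp hH
    obtain ⟨e, hne⟩ : ∃ e : H, ‖e‖ = 1 := by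
      obtain ⟨v, hv⟩ := exists_ne (0 : H)
      exact ⟨(‖v‖ : ℂ)⁻¹ • v, by
        rw [norm_smul]; simp [norm_ne_zero_iff.mpr hv]⟩
    have hee : ⟪e, e⟫ = 1 := by
      rw [inner_self_eq_norm_sq_to_K, hne]; norm_num
    have hE : e ≠ 0 := by intro h0; rw [h0] at hne; simp at hne
    -- separation lemma
    have sep : ∀ a b : K, (∀ Y : K →L[ℂ] H, Y a = Y b) → a = b := by
      intro a b hab
      refine ext_inner_left ℂ fun u => ?_
      have h1 := hab ((innerSL ℂ u).smulRight e)
      simp only [ContinuousLinearMap.smulRight_apply, innerSL_apply_apply] at h1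
      exact smul_left_injective ℂ hE h1
    -- key claim
    have key : ∀ (W W' : H →L[ℂ] K) (x x' : H), W x = W' x' → φ W x = φ W' x' := by
      intro W W' x x' hxx
      refine sep _ _ fun Y => ?_
      have h1 := congrFun (congrArg DFunLike.coe (h Y W)) x
      have h2 := congrFun (congrArg DFunLike.coe (h Y W')) x'
      simp only [ContinuousLinearMap.comp_apply] at h1 h2
      rw [h1, h2, hxx]
    have hWke : ∀ k : K, (innerSL ℂ e).smulRight k e = k := by
      intro k
      simp [hee, hne]
    -- the linear map D
    set Dl : K →ₗ[ℂ] K :=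
      { toFun := fun k => φ ((innerSL ℂ e).smulRight k) e
        map_add' := by
          intro a b
          have hab : (innerSL ℂ e).smulRight (a + b)
              = (innerSL ℂ e).smulRight a + (innerSL ℂ e).smulRight b := by
            ext x
            simp only [ContinuousLinearMap.smulRight_apply,
              ContinuousLinearMap.add_apply, smul_add]
          show φ ((innerSL ℂ e).smulRight (a + b)) e = _
          rw [hab, map_add, ContinuousLinearMap.add_apply]
        map_smul' := by
          intro c a
          have hca : (innerSL ℂ e).smulRight (c • a)
              = c • (innerSL ℂ e).smulRight a := by
            ext x
            simp only [ContinuousLinearMap.smulRight_apply,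
              ContinuousLinearMap.coe_smul', Pi.smul_apply]
            rw [smul_comm]
          show φ ((innerSL ℂ e).smulRight (c • a)) e = _
          rw [hca, map_smul, ContinuousLinearMap.smul_apply]
          rfl } with hDl
    have hDl_apply : ∀ k : K, Dl k = φ ((innerSL ℂ e).smulRight k) e := fun _ => rfl
    -- φ W x = Dl (W x)
    have hphi : ∀ (W : H →L[ℂ] K) (x : H), φ W x = Dl (W x) := by
      intro W x
      rw [hDl_apply]
      exact key W ((innerSL ℂ e).smulRight (W x)) x e (hWke (W x)).symm
    -- Y (Dl k) = ψ Y k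
    have hpsi : ∀ (Y : K →L[ℂ] H) (k : K), Y (Dl k) = ψ Y k := by
      intro Y k
      have h1 := congrFun (congrArg DFunLike.coe (h Y ((innerSL ℂ e).smulRight k))) e
      simp only [ContinuousLinearMap.comp_apply] at h1
      rw [hDl_apply, h1, hWke]
    -- inner products against Dl are continuous
    have hcont : ∀ u : K, Continuous fun k => ⟪u, Dl k⟫ := by
      intro u
      have heq : (fun k => ⟪u, Dl k⟫)
          = fun k => ⟪e, ψ ((innerSL ℂ u).smulRight e) k⟫ := by
        funext k
        rw [← hpsi ((innerSL ℂ u).smulRight e) k]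
        simp [inner_smul_right, hee, hne]
      rw [heq]
      exact (innerSL ℂ e).continuous.comp (ψ ((innerSL ℂ u).smulRight e)).continuous
    -- closed graph
    have hgraph : IsClosed (Dl.graph : Set (K × K)) := by
      have heq : (Dl.graph : Set (K × K)) =
          ⋂ u : K, {p : K × K | ⟪u, Dl p.1⟫ = ⟪u, p.2⟫} := by
        ext p
        simp only [Set.mem_iInter, Set.mem_setOf_eq, SetLike.mem_coe,
          LinearMap.mem_graph_iff]
        constructor
        · rintro hp u; rw [← hp]
        · intro hp
          exact (ext_inner_left ℂ fun u => hp u).symm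
      rw [heq]
      exact isClosed_iInter fun u =>
        isClosed_eq ((hcont u).comp continuous_fst)
          ((innerSL ℂ u).continuous.comp continuous_snd)
    have hDc : Continuous Dl := Dl.continuous_of_isClosed_graph hgraph
    refine ⟨⟨Dl, hDc⟩, fun W => ?_, fun Y => ?_⟩
    · ext x
      simp only [ContinuousLinearMap.comp_apply, ContinuousLinearMap.coe_mk']
      exact hphi W x
    · ext k
      simp only [ContinuousLinearMap.comp_apply, ContinuousLinearMap.coe_mk']
      exact (hpsi Y k).symm
end

section
/- Let H₁ and H₂ be Hilbert spaces and A₁₁: B(H₁) → B(H₁) a linear map. Suppose there exists a linear map B₁₂: B(H₂,H₁) → B(H₂,H₁) such that B₁₂(X∘V) = X∘B₁₂(V) + A₁₁(X)∘V for all X ∈ B(H₁) and V ∈ B(H₂,H₁), and assume H₂ ≠ 0. Then A₁₁ is a derivation on B(H₁). -/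
/-- Step 3: if B₁₂(X∘V) = X∘B₁₂(V) + A₁₁(X)∘V for all X ∈ B(H₁),
V ∈ B(H₂,H₁), with H₂ ≠ 0, then A₁₁ is a derivation on B(H₁). -/
theorem stmt11 {H₁ H₂ : Type*}
    [NormedAddCommGroup H₁] [InnerProductSpace ℂ H₁] [CompleteSpace H₁]
    [NormedAddCommGroup H₂] [InnerProductSpace ℂ H₂] [CompleteSpace H₂]
    [Nontrivial H₂]
    (A₁₁ : (H₁ →L[ℂ] H₁) →ₗ[ℂ] (H₁ →L[ℂ] H₁))
    (B₁₂ : (H₂ →L[ℂ] H₁) →ₗ[ℂ] (H₂ →L[ℂ] H₁))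
    (h : ∀ (X : H₁ →L[ℂ] H₁) (V : H₂ →L[ℂ] H₁),
      B₁₂ (X.comp V) = X.comp (B₁₂ V) + (A₁₁ X).comp V) :
    ∀ X₁ X₂ : H₁ →L[ℂ] H₁,
      A₁₁ (X₁ * X₂) = A₁₁ X₁ * X₂ + X₁ * A₁₁ X₂ := by
  intro X₁ X₂
  -- key: (A₁₁(X₁X₂) - X₁ A₁₁X₂ - A₁₁X₁ X₂).comp V = 0 for all V
  have key : ∀ V : H₂ →L[ℂ] H₁,
      (A₁₁ (X₁ * X₂)).comp V = (A₁₁ X₁ * X₂ + X₁ * A₁₁ X₂).comp V := by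
    intro V
    have h1 := h (X₁ * X₂) V
    have h2 := h X₂ V
    have h3 := h X₁ (X₂.comp V)
    have hc : (X₁ * X₂).comp V = X₁.comp (X₂.comp V) := by
      ext x; simp [ContinuousLinearMap.mul_apply]
    rw [hc, h3, h2] at h1
    ext x
    have := congrArg (fun f : H₂ →L[ℂ] H₁ => f x) h1
    simp [ContinuousLinearMap.comp_apply, ContinuousLinearMap.mul_apply,
      ContinuousLinearMap.add_apply] at this ⊢
    rw [add_assoc] at this
    have h4 := add_left_cancel this
    rw [← h4]; abel
  -- use a rank-one V to conclude
  obtain ⟨v, hv⟩ := exists_ne (0 : H₂)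
  ext w
  have hvn : ((‖v‖ : ℂ)^2) ≠ 0 := by
    have : ‖v‖ ≠ 0 := norm_ne_zero_iff.mpr hv
    exact pow_ne_zero 2 (by exact_mod_cast this)
  set φ : H₂ →L[ℂ] ℂ := ((‖v‖ : ℂ)^2)⁻¹ • (innerSL ℂ v) with hφ
  have hφv : φ v = 1 := by
    simp only [hφ, ContinuousLinearMap.smul_apply, innerSL_apply_apply]
    rw [inner_self_eq_norm_sq_to_K]
    rw [smul_eq_mul]; exact inv_mul_cancel₀ hvn
  set V : H₂ →L[ℂ] H₁ := φ.smulRight w with hV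
  have hVv : V v = w := by simp [hV, hφv]
  have := congrArg (fun f : H₂ →L[ℂ] H₁ => f v) (key V)
  simpa [ContinuousLinearMap.comp_apply, hVv] using this
end

section
/- Let H be a complex Hilbert space. Every derivation δ: B(H) → B(H) (a linear map satisfying δ(ST) = δ(S)T + Sδ(T) for all S,T) is inner: there exists A ∈ B(H) such that δ(X) = XA − AX for all X. -/
open Filter Topology

/-- Every derivation on B(H) is inner. -/
theorem stmt13 {H : Type*} [NormedAddCommGroup H] [InnerProductSpace ℂ H]
    [CompleteSpace H]
    (δ : (H →L[ℂ] H) →ₗ[ℂ] (H →L[ℂ] H))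
    (hδ : ∀ S T : H →L[ℂ] H, δ (S * T) = δ S * T + S * δ T) :
    ∃ A : H →L[ℂ] H, ∀ X : H →L[ℂ] H, δ X = X * A - A * X := by
  obtain hH | hH := subsingleton_or_nontrivial H
  · refine ⟨0, fun X => ?_⟩
    apply Subsingleton.elim
  · -- pick a unit vector e
    obtain ⟨e, he⟩ : ∃ e : H, ‖e‖ = 1 := by
      obtain ⟨x, hx⟩ := exists_ne (0 : H)
      exact ⟨‖x‖⁻¹ • x, by
        rw [norm_smul, norm_inv, norm_norm, inv_mul_cancel₀ (norm_ne_zero_iff.mpr hx)]⟩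
    have hee : (inner ℂ e e : ℂ) = 1 := by
      rw [inner_self_eq_norm_sq_to_K, he]; norm_num
    -- rank one operators
    set θ : H → (H →L[ℂ] H) := fun v => (innerSL ℂ e).smulRight v with hθ
    have θ_apply : ∀ v x, θ v x = (inner ℂ e x : ℂ) • v := fun v x => rfl
    have θ_e : ∀ v, θ v e = v := by
      intro v; rw [θ_apply, hee, one_smul]
    have comp_θ : ∀ (X : H →L[ℂ] H) v, X * θ v = θ (X v) := by
      intro X v; ext x
      simp [θ_apply, ContinuousLinearMap.mul_apply, map_smul]
    -- the (a priori unbounded) implementing map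
    set D : H →ₗ[ℂ] H :=
      { toFun := fun v => δ (θ v) e
        map_add' := by
          intro v w
          have : θ (v + w) = θ v + θ w := by ext x; simp [θ_apply, smul_add]
          simp [this]
        map_smul' := by
          intro c v
          have : θ (c • v) = c • θ v := by
            ext x
            simp only [θ_apply, ContinuousLinearMap.smul_apply]
            rw [smul_comm]
          simp [this] } with hD
    have D_apply : ∀ v, D v = δ (θ v) e := fun v => rfl
    -- key identity
    have key : ∀ (X : H →L[ℂ] H) v, δ X v = D (X v) - X (D v) := by
      intro X v
      have h1 := hδ X (θ v)
      rw [comp_θ] at h1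
      have h2 := congrArg (fun T => T e) h1
      simp only [ContinuousLinearMap.add_apply, ContinuousLinearMap.mul_apply, θ_e] at h2
      rw [D_apply, D_apply, h2]
      abel
    -- weak continuity identity
    have weak : ∀ (w v : H),
        (inner ℂ w (D v) : ℂ) • w =
          (inner ℂ w v : ℂ) • D w - δ ((innerSL ℂ w).smulRight w) v := by
      intro w v
      set P : H →L[ℂ] H := (innerSL ℂ w).smulRight w with hP
      have hPθ : P * θ v = (inner ℂ w v : ℂ) • θ w := by
        ext x
        simp [θ_apply, hP, ContinuousLinearMap.mul_apply, map_smul, smul_smul, mul_comm]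
      have h1 := hδ P (θ v)
      rw [hPθ, map_smul] at h1
      have h2 := congrArg (fun T => T e) h1
      simp only [ContinuousLinearMap.add_apply, ContinuousLinearMap.mul_apply, θ_e,
        ContinuousLinearMap.smul_apply] at h2
      have hPapp : ∀ z, P z = (inner ℂ w z : ℂ) • w := fun z => rfl
      rw [D_apply, D_apply, ← hPapp]
      rw [h2, hPapp]
      abel
    -- continuity via closed graph
    have hcont : Continuous D := by
      apply D.continuous_of_seq_closed_graph
      intro u x y hu hy
      set v : ℕ → H := fun n => u n - x with hv
      have hv0 : Tendsto v atTop (𝓝 0) := by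
        simpa [hv] using hu.sub (tendsto_const_nhds (x := x))
      set z : H := y - D x with hz
      have hDz : Tendsto (fun n => D (v n)) atTop (𝓝 z) := by
        have : (fun n => D (v n)) = fun n => D (u n) - D x := by
          funext n; simp [hv, map_sub]
        rw [this, hz]
        exact hy.sub tendsto_const_nhds
      have hzero : z = 0 := by
        have hw : ∀ w : H, (inner ℂ w z : ℂ) = 0 := by
          intro w
          rcases eq_or_ne w 0 with rfl | hw0
          · simp
          have t1 : Tendsto (fun n => (inner ℂ w (D (v n)) : ℂ) • w) atTop
              (𝓝 ((inner ℂ w z : ℂ) • w)) := by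
            exact (((innerSL ℂ w).continuous.tendsto z).comp hDz).smul tendsto_const_nhds
          have t2 : Tendsto (fun n => (inner ℂ w (v n) : ℂ) • D w -
              δ ((innerSL ℂ w).smulRight w) (v n)) atTop (𝓝 0) := by
            have l1 : Tendsto (fun n => (inner ℂ w (v n) : ℂ) • D w) atTop (𝓝 0) := by
              have := (((innerSL ℂ w).continuous.tendsto 0).comp hv0).smul
                (tendsto_const_nhds (x := D w))
              simpa using this
            have l2 : Tendsto (fun n => δ ((innerSL ℂ w).smulRight w) (v n)) atTop (𝓝 0) := by
              have := ((δ ((innerSL ℂ w).smulRight w)).continuous.tendsto 0).comp hv0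
              simpa [Function.comp_def] using this
            simpa using l1.sub l2
          have heq : (fun n => (inner ℂ w (D (v n)) : ℂ) • w) =
              fun n => (inner ℂ w (v n) : ℂ) • D w - δ ((innerSL ℂ w).smulRight w) (v n) := by
            funext n; exact weak w (v n)
          rw [heq] at t1
          have := tendsto_nhds_unique t1 t2
          rcases smul_eq_zero.mp this with h | h
          · exact h
          · exact absurd h hw0
        have := hw z
        rwa [inner_self_eq_zero] at this
      rw [hz] at hzero
      exact (sub_eq_zero.mp hzero).symm ▸ rfl
    -- build the implementing operator
    set Dc : H →L[ℂ] H := { toLinearMap := D, cont := hcont } with hDc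
    refine ⟨-Dc, fun X => ?_⟩
    ext v
    have h2 : (X * -Dc - -Dc * X) v = D (X v) - X (D v) := by
      have hd : ∀ u, Dc u = D u := fun u => rfl
      simp only [ContinuousLinearMap.sub_apply, ContinuousLinearMap.mul_apply,
        ContinuousLinearMap.neg_apply, map_neg, hd]
      abel
    rw [h2]
    exact key X v
end
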